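/- arXiv:2508.11041 — 2 statements merged into one kernel-verified Lean document; each statement's English description precedes it below -/
import Mathlib

section
/- Let A be a bounded open subset of ℝ and let f_k, f ∈ L¹(A) be non-negative functions such that ∫_A f_k dx → ∫_A f dx and f(x) = liminf_{k→∞} f_k(x) for a.e. x ∈ A. Then f_k → f in L¹(A). -/
open MeasureTheory Filter Topology

/-- Lemma `Fatou=`. Let `A ⊂ ℝ` be a bounded open set and let
`f_k, f ∈ L¹(A)` be non-negative functions such that `∫_A f_k → ∫_A f` and
`f(x) = liminf_k f_k(x)` for a.e. `x ∈ A`. Then `f_k → f` in `L¹(A)`. -/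
theorem stmt0 (A : Set ℝ) (hAopen : IsOpen A) (hAbd : Bornology.IsBounded A)
    (f : ℕ → ℝ → ℝ) (g : ℝ → ℝ)
    (hfint : ∀ k, IntegrableOn (f k) A) (hgint : IntegrableOn g A)
    (hfnn : ∀ k, ∀ᵐ x ∂(volume.restrict A), 0 ≤ f k x)
    (hgnn : ∀ᵐ x ∂(volume.restrict A), 0 ≤ g x)
    (hconv : Tendsto (fun k => ∫ x in A, f k x) atTop (𝓝 (∫ x in A, g x)))
    (hliminf : ∀ᵐ x ∂(volume.restrict A), g x = liminf (fun k => f k x) atTop) :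
    Tendsto (fun k => ∫ x in A, |f k x - g x|) atTop (𝓝 0) := by
  set μ := volume.restrict A with hμ
  have hae : ∀ᵐ x ∂μ, (∀ k, 0 ≤ f k x) ∧ 0 ≤ g x ∧ g x = liminf (fun k => f k x) atTop :=
    (ae_all_iff.2 hfnn).and (hgnn.and hliminf)
  set h : ℕ → ℝ → ℝ := fun k x => max (g x - f k x) 0 with hh
  have hmeas : ∀ k, AEStronglyMeasurable (h k) μ := fun k =>
    (hgint.1.sub (hfint k).1).sup aestronglyMeasurable_const
  have hbound : ∀ k, ∀ᵐ x ∂μ, ‖h k x‖ ≤ g x := by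
    intro k
    filter_upwards [hae] with x hx
    rw [Real.norm_eq_abs, abs_of_nonneg (le_max_right _ _)]
    exact max_le (by linarith [hx.1 k]) hx.2.1
  have hhint : ∀ k, Integrable (h k) μ := by
    intro k
    refine MeasureTheory.Integrable.mono hgint (hmeas k) ?_
    filter_upwards [hbound k, hgnn] with x hx hgx
    rwa [Real.norm_eq_abs (g x), abs_of_nonneg hgx]
  have htend : ∀ᵐ x ∂μ, Tendsto (fun k => h k x) atTop (𝓝 0) := by
    filter_upwards [hae] with x hx
    have hb : IsBoundedUnder (· ≥ ·) atTop (fun k => f k x) :=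
      isBoundedUnder_of ⟨0, fun k => hx.1 k⟩
    rw [Metric.tendsto_atTop]
    intro ε hε
    have hlt : g x - ε < liminf (fun k => f k x) atTop := by
      rw [← hx.2.2]; linarith
    obtain ⟨N, hN⟩ := eventually_atTop.1 (eventually_lt_of_lt_liminf hlt hb)
    refine ⟨N, fun n hn => ?_⟩
    rw [Real.dist_eq, sub_zero, abs_of_nonneg (le_max_right _ _)]
    exact max_lt (by linarith [hN n hn]) hε
  have hDCT : Tendsto (fun k => ∫ x in A, h k x) atTop (𝓝 (∫ x in A, (0:ℝ))) :=
    tendsto_integral_of_dominated_convergence g hmeas hgint hbound htend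
  have key : ∀ k, (∫ x in A, |f k x - g x|)
      = (∫ x in A, (f k x - g x)) + 2 * ∫ x in A, h k x := by
    intro k
    have heq : ∀ x, |f k x - g x| = (f k x - g x) + 2 * h k x := by
      intro x
      simp only [hh]
      rcases le_total (g x) (f k x) with hle | hle
      · rw [abs_of_nonneg (by linarith), max_eq_right (by linarith)]; ring
      · rw [abs_of_nonpos (by linarith), max_eq_left (by linarith)]; ring
    simp_rw [heq]
    have ha : Integrable (fun x => f k x - g x) μ := (hfint k).sub hgint
    have hb : Integrable (fun x => 2 * h k x) μ := (hhint k).const_mul 2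
    rw [integral_add ha hb, integral_const_mul]
  have h1 : Tendsto (fun k => ∫ x in A, (f k x - g x)) atTop (𝓝 0) := by
    have heq : ∀ k, (∫ x in A, (f k x - g x)) = (∫ x in A, f k x) - ∫ x in A, g x :=
      fun k => integral_sub (hfint k) hgint
    simp_rw [heq]
    simpa [hμ] using hconv.sub (tendsto_const_nhds (x := ∫ x in A, g x) (f := atTop))
  have hfin := h1.add (hDCT.const_mul 2)
  simp only [integral_zero, mul_zero, add_zero] at hfin
  simpa only [key, hμ] using hfin
end

section
/- Let A ⊂ ℝ² be open and bounded and let h ≥ 1. Suppose V_k, V ∈ L¹(A;ℝ^h), V_k ⇀ V weakly-* in L¹(A;ℝ^h), and ∫_A √(1+|V_k|²) dx → ∫_A √(1+|V|²) dx. Then V_k → V strongly in L¹(A;ℝ^h). -/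
set_option linter.unusedSectionVars false
set_option linter.unusedVariables false
set_option maxHeartbeats 1000000

open MeasureTheory Filter Topology Set
open scoped RealInnerProductSpace

section AuxPointwise
variable {E : Type*} [NormedAddCommGroup E] [InnerProductSpace ℝ E]


lemma aux_sq (v : E) : (Real.sqrt (1 + ‖v‖ ^ 2)) ^ 2 = 1 + ‖v‖ ^ 2 :=
  Real.sq_sqrt (by positivity)

lemma aux_one_le (v : E) : 1 ≤ Real.sqrt (1 + ‖v‖ ^ 2) := by
  have h := Real.sqrt_le_sqrt (show (1:ℝ) ≤ 1 + ‖v‖ ^ 2 by nlinarith [sq_nonneg ‖v‖])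
  rwa [Real.sqrt_one] at h

lemma aux_norm_le (v : E) : ‖v‖ ≤ Real.sqrt (1 + ‖v‖ ^ 2) := by
  have h := Real.sqrt_le_sqrt (show ‖v‖ ^ 2 ≤ 1 + ‖v‖ ^ 2 by linarith)
  rwa [Real.sqrt_sq (norm_nonneg v)] at h

lemma aux_le_one_add (v : E) : Real.sqrt (1 + ‖v‖ ^ 2) ≤ 1 + ‖v‖ := by
  have h := Real.sqrt_le_sqrt (show 1 + ‖v‖ ^ 2 ≤ (1 + ‖v‖) ^ 2 by nlinarith [norm_nonneg v])
  rwa [Real.sqrt_sq (by positivity : (0:ℝ) ≤ 1 + ‖v‖)] at h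

lemma key_nonneg (a b : E) :
    0 ≤ Real.sqrt (1 + ‖a‖ ^ 2) * Real.sqrt (1 + ‖b‖ ^ 2) - 1 - ⟪a, b⟫ := by
  have h1 : 1 + ‖a‖ * ‖b‖ ≤ Real.sqrt (1 + ‖a‖ ^ 2) * Real.sqrt (1 + ‖b‖ ^ 2) := by
    rw [← Real.sqrt_mul (by positivity)]
    rw [show (1 : ℝ) + ‖a‖ * ‖b‖ = Real.sqrt ((1 + ‖a‖ * ‖b‖) ^ 2) from
      (Real.sqrt_sq (by positivity)).symm]
    exact Real.sqrt_le_sqrt (by nlinarith [sq_nonneg (‖a‖ - ‖b‖)])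
  have h2 := real_inner_le_norm a b
  linarith

lemma identityL2 (a b : E) :
    ‖a - b‖ ^ 2 = (Real.sqrt (1 + ‖a‖ ^ 2) - Real.sqrt (1 + ‖b‖ ^ 2)) ^ 2
      + 2 * (Real.sqrt (1 + ‖a‖ ^ 2) * Real.sqrt (1 + ‖b‖ ^ 2) - 1 - ⟪a, b⟫) := by
  have h1 := aux_sq a
  have h2 := aux_sq b
  have h3 : ‖a - b‖ ^ 2 = ‖a‖ ^ 2 - 2 * ⟪a, b⟫ + ‖b‖ ^ 2 := norm_sub_sq_real a b
  nlinarith [h1, h2, h3]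

lemma lip (a b : E) :
    |Real.sqrt (1 + ‖a‖ ^ 2) - Real.sqrt (1 + ‖b‖ ^ 2)| ≤ ‖a - b‖ := by
  have h1 := identityL2 a b
  have h2 := key_nonneg a b
  have h3 : (Real.sqrt (1 + ‖a‖ ^ 2) - Real.sqrt (1 + ‖b‖ ^ 2)) ^ 2 ≤ ‖a - b‖ ^ 2 := by linarith
  calc |Real.sqrt (1 + ‖a‖ ^ 2) - Real.sqrt (1 + ‖b‖ ^ 2)|
      = Real.sqrt ((Real.sqrt (1 + ‖a‖ ^ 2) - Real.sqrt (1 + ‖b‖ ^ 2)) ^ 2) :=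
        (Real.sqrt_sq_eq_abs _).symm
    _ ≤ Real.sqrt (‖a - b‖ ^ 2) := Real.sqrt_le_sqrt h3
    _ = ‖a - b‖ := Real.sqrt_sq (norm_nonneg _)

lemma quant (a b : E) :
    2 * ‖a - b‖ ^ 2 ≤ (Real.sqrt (1 + ‖a‖ ^ 2) * Real.sqrt (1 + ‖b‖ ^ 2) - 1 - ⟪a, b⟫)
      * (Real.sqrt (1 + ‖a‖ ^ 2) + Real.sqrt (1 + ‖b‖ ^ 2)) ^ 2 := by
  set s := Real.sqrt (1 + ‖a‖ ^ 2) with hs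
  set t := Real.sqrt (1 + ‖b‖ ^ 2) with ht
  have hsq : s ^ 2 = 1 + ‖a‖ ^ 2 := aux_sq a
  have htq : t ^ 2 = 1 + ‖b‖ ^ 2 := aux_sq b
  have hP : 0 ≤ s * t - 1 - ⟪a, b⟫ := key_nonneg a b
  have hx : ‖a - b‖ ^ 2 = ‖a‖ ^ 2 - 2 * ⟪a, b⟫ + ‖b‖ ^ 2 := norm_sub_sq_real a b
  have hu : ‖a + b‖ ^ 2 = ‖a‖ ^ 2 + 2 * ⟪a, b⟫ + ‖b‖ ^ 2 := norm_add_sq_real a b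
  have hinner : ⟪a - b, a + b⟫ = ‖a‖ ^ 2 - ‖b‖ ^ 2 := by
    rw [inner_sub_left, inner_add_right, inner_add_right, real_inner_self_eq_norm_sq,
      real_inner_self_eq_norm_sq, real_inner_comm b a]
    ring
  have hcauchy : (⟪a - b, a + b⟫) ^ 2 ≤ ‖a - b‖ ^ 2 * ‖a + b‖ ^ 2 := by
    have := abs_real_inner_le_norm (a - b) (a + b)
    nlinarith [abs_nonneg (⟪a - b, a + b⟫), sq_abs (⟪a - b, a + b⟫)]
  -- (s-t)(s+t) = s²-t² = ‖a‖²-‖b‖² = ⟪a-b,a+b⟫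
  have hst : (s - t) * (s + t) = ⟪a - b, a + b⟫ := by rw [hinner]; nlinarith [hsq, htq]
  -- (s+t)² ≥ ‖a+b‖² + 4
  have he3 : ‖a + b‖ ^ 2 + 4 ≤ (s + t) ^ 2 := by nlinarith [hP, hsq, htq, hu]
  -- identity: 2P = x² - (s-t)²
  have he1 : 2 * (s * t - 1 - ⟪a, b⟫) = ‖a - b‖ ^ 2 - (s - t) ^ 2 := by
    have := identityL2 a b; rw [← hs, ← ht] at this; linarith
  -- combine
  have h4 : (s - t) ^ 2 * (s + t) ^ 2 ≤ ‖a - b‖ ^ 2 * ‖a + b‖ ^ 2 := by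
    have : ((s - t) * (s + t)) ^ 2 ≤ ‖a - b‖ ^ 2 * ‖a + b‖ ^ 2 := by rw [hst]; exact hcauchy
    nlinarith [this]
  nlinarith [he1, he3, h4, sq_nonneg (‖a - b‖), mul_le_mul_of_nonneg_left he3 (sq_nonneg ‖a - b‖)]


/-- gradient identity -/
lemma grad_eq (a b : E) :
    Real.sqrt (1 + ‖a‖ ^ 2) - Real.sqrt (1 + ‖b‖ ^ 2)
      - ⟪a - b, (Real.sqrt (1 + ‖b‖ ^ 2))⁻¹ • b⟫
    = (Real.sqrt (1 + ‖a‖ ^ 2) * Real.sqrt (1 + ‖b‖ ^ 2) - 1 - ⟪a, b⟫)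
        / Real.sqrt (1 + ‖b‖ ^ 2) := by
  set s := Real.sqrt (1 + ‖a‖ ^ 2)
  set t := Real.sqrt (1 + ‖b‖ ^ 2) with ht
  have ht1 : 1 ≤ t := aux_one_le b
  have ht0 : t ≠ 0 := by linarith
  have htq : t ^ 2 = 1 + ‖b‖ ^ 2 := aux_sq b
  rw [real_inner_smul_right, inner_sub_left, real_inner_self_eq_norm_sq]
  field_simp
  nlinarith [htq]

/-- L4 : main measure-splitting pointwise bound -/
lemma pointwise_meas (ε m : ℝ) (hε : 0 < ε) (hm : 0 < m) (a b : E) :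
    max (Real.sqrt (1 + ‖b‖ ^ 2) - Real.sqrt (1 + ‖a‖ ^ 2)) 0
      ≤ ε + min (Real.sqrt (1 + ‖b‖ ^ 2) - 1) ((Real.sqrt (1 + ‖b‖ ^ 2) - 1) ^ 2 / m)
        + (2 * m * (1 + m) ^ 3 / ε ^ 2)
          * ((Real.sqrt (1 + ‖a‖ ^ 2) * Real.sqrt (1 + ‖b‖ ^ 2) - 1 - ⟪a, b⟫)
              / Real.sqrt (1 + ‖b‖ ^ 2)) := by
  set s := Real.sqrt (1 + ‖a‖ ^ 2) with hs
  set t := Real.sqrt (1 + ‖b‖ ^ 2) with ht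
  have hs1 : 1 ≤ s := aux_one_le a
  have ht1 : 1 ≤ t := aux_one_le b
  have hP : 0 ≤ s * t - 1 - ⟪a, b⟫ := key_nonneg a b
  set P := s * t - 1 - ⟪a, b⟫ with hPdef
  have hmin0 : 0 ≤ min (t - 1) ((t - 1) ^ 2 / m) :=
    le_min (by linarith) (by positivity)
  have hK0 : 0 ≤ (2 * m * (1 + m) ^ 3 / ε ^ 2) * (P / t) := by positivity
  rcases lt_or_ge ‖a - b‖ ε with hcase | hcase
  · -- close case
    have h1 : t - s ≤ ‖a - b‖ := by
      have := lip a b; rw [← hs, ← ht] at this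
      have := abs_le.1 this
      linarith [this.1]
    exact max_le (by linarith) (by positivity)
  rcases le_or_gt t s with hts | hts
  · exact max_le (by linarith) (by positivity)
  rcases le_or_gt m (t - 1) with htm | htm
  · -- large b case: min = t - 1
    have hminval : min (t - 1) ((t - 1) ^ 2 / m) = t - 1 := by
      apply min_eq_left
      rw [le_div_iff₀ hm]
      nlinarith
    rw [hminval]
    exact max_le (by linarith) (by linarith [hε.le, hK0])
  · -- main case: show m ≤ K * (P / t)
    have hq := quant a b
    rw [← hs, ← ht, ← hPdef] at hq
    have hεx : ε ^ 2 ≤ ‖a - b‖ ^ 2 := by nlinarith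
    have hst2 : (s + t) ^ 2 ≤ (2 * t) ^ 2 := by nlinarith
    have h1 : 2 * ε ^ 2 ≤ P * (2 * t) ^ 2 := by
      calc 2 * ε ^ 2 ≤ 2 * ‖a - b‖ ^ 2 := by linarith
        _ ≤ P * (s + t) ^ 2 := hq
        _ ≤ P * (2 * t) ^ 2 := by nlinarith
    -- so  ε² ≤ 2 P t²,  and t < 1 + m
    have h2 : ε ^ 2 ≤ 2 * P * t ^ 2 := by nlinarith
    have htm' : t < 1 + m := by linarith
    have hgoal : m ≤ (2 * m * (1 + m) ^ 3 / ε ^ 2) * (P / t) := by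
      rw [div_mul_div_comm, le_div_iff₀ (by positivity)]
      have ht3 : t ^ 3 ≤ (1 + m) ^ 3 := pow_le_pow_left₀ (by linarith) htm'.le 3
      have hmt : m * t * ε ^ 2 ≤ m * t * (2 * P * t ^ 2) :=
        mul_le_mul_of_nonneg_left h2 (by positivity)
      nlinarith [hmt, mul_le_mul_of_nonneg_left ht3 (mul_nonneg (by positivity : (0:ℝ) ≤ 2 * m) hP)]
    exact max_le (by linarith) (by linarith [hε.le, hmin0])

/-- L5 : master pointwise inequality -/
lemma pointwise_main (δ : ℝ) (hδ : 0 < δ) (a b : E) :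
    ‖a - b‖ ≤ (Real.sqrt (1 + ‖a‖ ^ 2) - Real.sqrt (1 + ‖b‖ ^ 2))
      + 2 * max (Real.sqrt (1 + ‖b‖ ^ 2) - Real.sqrt (1 + ‖a‖ ^ 2)) 0
      + δ * Real.sqrt (1 + ‖b‖ ^ 2)
      + ((Real.sqrt (1 + ‖a‖ ^ 2) * Real.sqrt (1 + ‖b‖ ^ 2) - 1 - ⟪a, b⟫)
          / Real.sqrt (1 + ‖b‖ ^ 2)) / (2 * δ) := by
  set s := Real.sqrt (1 + ‖a‖ ^ 2) with hs
  set t := Real.sqrt (1 + ‖b‖ ^ 2) with ht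
  have hs1 : 1 ≤ s := aux_one_le a
  have ht1 : 1 ≤ t := aux_one_le b
  have hP : 0 ≤ s * t - 1 - ⟪a, b⟫ := key_nonneg a b
  set P := s * t - 1 - ⟪a, b⟫ with hPdef
  set D := P / t with hD
  have hD0 : 0 ≤ D := by positivity
  have habs : (s - t) + 2 * max (t - s) 0 = |s - t| := by
    rcases le_total t s with hc | hc
    · rw [max_eq_right (by linarith), abs_of_nonneg (by linarith)]; ring
    · rw [max_eq_left (by linarith), abs_of_nonpos (by linarith)]; ring
  rw [add_assoc, add_assoc, ← add_assoc ((s-t)) _ _, habs]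
  have hPt : P = t * D := by rw [hD]; field_simp
  have hid : ‖a - b‖ ^ 2 = (s - t) ^ 2 + 2 * (t * D) := by
    have := identityL2 a b; rw [← hs, ← ht, ← hPdef] at this; rw [← hPt]; linarith
  have hamgm : 2 * (t * D) ≤ (δ * t + D / (2 * δ)) ^ 2 := by
    have h1 : 0 ≤ (δ * t - D / (2 * δ)) ^ 2 := sq_nonneg _
    have h2 : (δ * t) * (D / (2 * δ)) = t * D / 2 := by field_simp
    nlinarith [h1, h2]
  have hR0 : 0 ≤ |s - t| + (δ * t + D / (2 * δ)) := by positivity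
  have hsq : ‖a - b‖ ^ 2 ≤ (|s - t| + (δ * t + D / (2 * δ))) ^ 2 := by
    have := sq_abs (s - t)
    nlinarith [abs_nonneg (s - t), mul_nonneg (abs_nonneg (s-t)) (by positivity : (0:ℝ) ≤ δ * t + D / (2*δ))]
  nlinarith [hsq, hR0, norm_nonneg (a - b)]



end AuxPointwise

/-- Let `A ⊂ ℝ²` be open and bounded and `h ≥ 1`. If
`V_k, V ∈ L¹(A;ℝ^h)`, `V_k ⇀ V` weakly-* in `L¹` (i.e. tested against bounded
measurable functions) and `∫_A √(1+|V_k|²) → ∫_A √(1+|V|²)`, then `V_k → V`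
strongly in `L¹(A;ℝ^h)`. -/
theorem stmt14 (A : Set (ℝ × ℝ)) (hAopen : IsOpen A) (hAbd : Bornology.IsBounded A)
    (h : ℕ) (hh : 1 ≤ h)
    (V : ℕ → ℝ × ℝ → EuclideanSpace ℝ (Fin h))
    (W : ℝ × ℝ → EuclideanSpace ℝ (Fin h))
    (hVint : ∀ k, IntegrableOn (V k) A) (hWint : IntegrableOn W A)
    (hweak : ∀ g : ℝ × ℝ → EuclideanSpace ℝ (Fin h),
      Measurable g → (∃ C : ℝ, ∀ x, ‖g x‖ ≤ C) →
      Tendsto (fun k => ∫ x in A, ⟪V k x, g x⟫) atTop (𝓝 (∫ x in A, ⟪W x, g x⟫)))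
    (harea : Tendsto (fun k => ∫ x in A, Real.sqrt (1 + ‖V k x‖ ^ 2)) atTop
      (𝓝 (∫ x in A, Real.sqrt (1 + ‖W x‖ ^ 2)))) :
    Tendsto (fun k => ∫ x in A, ‖V k x - W x‖) atTop (𝓝 0) := by
  classical
  -- finiteness of the measure of A
  have hAfin : volume A ≠ ⊤ :=
    (lt_of_le_of_lt (measure_mono subset_closure) hAbd.isCompact_closure.measure_lt_top).ne
  haveI hfin : IsFiniteMeasure (volume.restrict A) :=
    ⟨by rw [Measure.restrict_apply_univ]; exact lt_top_iff_ne_top.2 hAfin⟩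
  set fV : ℕ → (ℝ × ℝ) → ℝ := fun k x => Real.sqrt (1 + ‖V k x‖ ^ 2) with hfVdef
  set fW : (ℝ × ℝ) → ℝ := fun x => Real.sqrt (1 + ‖W x‖ ^ 2) with hfWdef
  have hVm : ∀ k, AEStronglyMeasurable (V k) (volume.restrict A) := fun k => (hVint k).1
  have hWm : AEStronglyMeasurable W (volume.restrict A) := hWint.1
  set W' := hWm.mk W with hW'def
  have hW'sm : StronglyMeasurable W' := hWm.stronglyMeasurable_mk
  have hWW' : W =ᵐ[volume.restrict A] W' := hWm.ae_eq_mk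
  set g : ℝ × ℝ → EuclideanSpace ℝ (Fin h) :=
    fun x => (Real.sqrt (1 + ‖W' x‖ ^ 2))⁻¹ • W' x with hgdef
  have hW'meas : Measurable W' := hW'sm.measurable
  have hgmeas : Measurable g := by
    have h2 : Measurable fun x => Real.sqrt (1 + ‖W' x‖ ^ 2) :=
      (measurable_const.add ((hW'meas.norm).pow_const 2)).sqrt
    exact h2.inv.smul hW'meas
  have hgbd : ∀ x, ‖g x‖ ≤ 1 := by
    intro x
    have h1 := aux_norm_le (W' x)
    have h2 := aux_one_le (W' x)
    have h3 : ‖g x‖ = (Real.sqrt (1 + ‖W' x‖ ^ 2))⁻¹ * ‖W' x‖ := by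
      rw [hgdef]
      simp only
      rw [norm_smul, Real.norm_eq_abs, abs_of_nonneg (inv_nonneg.2 (Real.sqrt_nonneg _))]
    rw [h3]
    have h4 : (Real.sqrt (1 + ‖W' x‖ ^ 2))⁻¹ * ‖W' x‖
        ≤ (Real.sqrt (1 + ‖W' x‖ ^ 2))⁻¹ * Real.sqrt (1 + ‖W' x‖ ^ 2) :=
      mul_le_mul_of_nonneg_left h1 (inv_nonneg.2 (Real.sqrt_nonneg _))
    rwa [inv_mul_cancel₀ (by linarith)] at h4
  -- integrability of the various integrands
  have hcont : Continuous (fun v : EuclideanSpace ℝ (Fin h) => Real.sqrt (1 + ‖v‖ ^ 2)) := by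
    fun_prop
  have hfVint : ∀ k, IntegrableOn (fV k) A := by
    intro k
    refine Integrable.mono' ((integrable_const 1).add (hVint k).norm)
      (hcont.comp_aestronglyMeasurable (hVm k)) (ae_of_all _ fun x => ?_)
    rw [Real.norm_eq_abs, abs_of_nonneg (Real.sqrt_nonneg _)]
    exact aux_le_one_add (V k x)
  have hfWint : IntegrableOn fW A := by
    refine Integrable.mono' ((integrable_const 1).add hWint.norm)
      (hcont.comp_aestronglyMeasurable hWm) (ae_of_all _ fun x => ?_)
    rw [Real.norm_eq_abs, abs_of_nonneg (Real.sqrt_nonneg _)]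
    exact aux_le_one_add (W x)
  have hinner : ∀ (U : (ℝ × ℝ) → EuclideanSpace ℝ (Fin h)),
      IntegrableOn U A → IntegrableOn (fun x => ⟪U x, g x⟫) A := by
    intro U hU
    refine Integrable.mono' hU.norm (hU.1.inner hgmeas.aestronglyMeasurable)
      (ae_of_all _ fun x => ?_)
    calc ‖⟪U x, g x⟫‖ = |⟪U x, g x⟫| := rfl
      _ ≤ ‖U x‖ * ‖g x‖ := abs_real_inner_le_norm _ _
      _ ≤ ‖U x‖ * 1 := mul_le_mul_of_nonneg_left (hgbd x) (norm_nonneg _)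
      _ = ‖U x‖ := mul_one _
  set Dk : ℕ → (ℝ × ℝ) → ℝ := fun k x => fV k x - fW x - ⟪V k x - W x, g x⟫ with hDdef
  have hDint : ∀ k, IntegrableOn (Dk k) A := fun k =>
    ((hfVint k).sub hfWint).sub (hinner _ ((hVint k).sub hWint))
  -- a.e. identity for Dk
  have hDae : ∀ k, ∀ᵐ x ∂(volume.restrict A),
      Dk k x = (fV k x * fW x - 1 - ⟪V k x, W x⟫) / fW x := by
    intro k
    filter_upwards [hWW'] with x hx
    rw [hDdef, hfVdef, hfWdef]
    simp only
    rw [hgdef]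
    simp only
    rw [← hx]
    exact grad_eq (V k x) (W x)
  have hDpos : ∀ k, 0 ≤ᵐ[volume.restrict A] Dk k := by
    intro k
    filter_upwards [hDae k] with x hx
    rw [Pi.zero_apply, hx]
    exact div_nonneg (key_nonneg (V k x) (W x)) (Real.sqrt_nonneg _)
  -- convergence of ∫ Dk to 0
  have hJ := hweak g hgmeas ⟨1, hgbd⟩
  have hdksplit : ∀ k, ∫ x in A, Dk k x
      = ((∫ x in A, fV k x) - (∫ x in A, fW x))
        - ((∫ x in A, ⟪V k x, g x⟫) - (∫ x in A, ⟪W x, g x⟫)) := by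
    intro k
    have e1 : ∀ x, Dk k x = (fV k x - fW x) - (⟪V k x, g x⟫ - ⟪W x, g x⟫) := by
      intro x
      rw [hDdef]
      simp only [inner_sub_left]
    have i1 : Integrable (fun x => fV k x - fW x) (volume.restrict A) :=
      (hfVint k).sub hfWint
    have i2 : Integrable (fun x => (⟪V k x, g x⟫ : ℝ) - ⟪W x, g x⟫) (volume.restrict A) :=
      (hinner _ (hVint k)).sub (hinner _ hWint)
    rw [integral_congr_ae (ae_of_all _ e1), integral_sub i1 i2,
      integral_sub (hfVint k) hfWint, integral_sub (hinner _ (hVint k)) (hinner _ hWint)]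
  have hdk : Tendsto (fun k => ∫ x in A, Dk k x) atTop (𝓝 0) := by
    have c1 : Tendsto (fun _ : ℕ => ∫ x in A, fW x) atTop (𝓝 (∫ x in A, fW x)) :=
      tendsto_const_nhds
    have c2 : Tendsto (fun _ : ℕ => ∫ x in A, (⟪W x, g x⟫ : ℝ)) atTop
        (𝓝 (∫ x in A, (⟪W x, g x⟫ : ℝ))) := tendsto_const_nhds
    have ht := (harea.sub c1).sub (hJ.sub c2)
    simp only [sub_self, sub_zero] at ht
    exact (tendsto_congr fun k => (hdksplit k).symm).1 ht
  have hdknonneg : ∀ k, 0 ≤ ∫ x in A, Dk k x := fun k =>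
    integral_nonneg_of_ae (hDpos k)
  -- max part
  have hmaxint : ∀ k, IntegrableOn (fun x => max (fW x - fV k x) 0) A := fun k =>
    (hfWint.sub (hfVint k)).pos_part
  -- tail integrand
  set tail : ℕ → (ℝ × ℝ) → ℝ :=
    fun j x => min (fW x - 1) ((fW x - 1) ^ 2 / ((j : ℝ) + 1)) with htaildef
  have hfWm1 : ∀ x, 0 ≤ fW x - 1 := fun x => by
    have := aux_one_le (W x); simp only [hfWdef]; linarith
  have htail_aesm : ∀ j, AEStronglyMeasurable (tail j) (volume.restrict A) := by
    intro j
    have h1 : AEMeasurable (fun x => fW x - 1) (volume.restrict A) :=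
      (hfWint.1.aemeasurable).sub aemeasurable_const
    exact (h1.min ((h1.pow_const 2).div aemeasurable_const)).aestronglyMeasurable
  have htail_le : ∀ j x, tail j x ≤ fW x - 1 := fun j x => min_le_left _ _
  have htail_nonneg : ∀ j x, 0 ≤ tail j x := fun j x =>
    le_min (hfWm1 x) (by positivity)
  have htailint : ∀ j, IntegrableOn (tail j) A := by
    intro j
    refine Integrable.mono' (hfWint.sub (integrable_const 1)) (htail_aesm j)
      (ae_of_all _ fun x => ?_)
    rw [Real.norm_eq_abs, abs_of_nonneg (htail_nonneg j x)]
    exact htail_le j x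
  have htail0 : Tendsto (fun j => ∫ x in A, tail j x) atTop (𝓝 0) := by
    have hbd : Integrable (fun x => fW x - 1) (volume.restrict A) :=
      hfWint.sub (integrable_const 1)
    have hlim : ∀ᵐ x ∂(volume.restrict A),
        Tendsto (fun j : ℕ => tail j x) atTop (𝓝 0) := by
      refine ae_of_all _ fun x => ?_
      have hdiv : Tendsto (fun j : ℕ => (fW x - 1) ^ 2 / ((j : ℝ) + 1)) atTop (𝓝 0) :=
        Tendsto.div_atTop tendsto_const_nhds
          (tendsto_atTop_add_const_right _ 1 tendsto_natCast_atTop_atTop)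
      exact tendsto_of_tendsto_of_tendsto_of_le_of_le tendsto_const_nhds hdiv
        (fun j => htail_nonneg j x) (fun j => min_le_right _ _)
    have := tendsto_integral_of_dominated_convergence (fun x => fW x - 1)
      htail_aesm hbd
      (fun j => ae_of_all _ fun x => by
        rw [Real.norm_eq_abs, abs_of_nonneg (htail_nonneg j x)]; exact htail_le j x)
      hlim
    simpa using this
  -- bound for the positive part integral
  have hNbound : ∀ (ε : ℝ), 0 < ε → ∀ (j : ℕ) (k : ℕ),
      ∫ x in A, max (fW x - fV k x) 0
        ≤ ε * (volume A).toReal + (∫ x in A, tail j x)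
          + (2 * ((j : ℝ) + 1) * (1 + ((j : ℝ) + 1)) ^ 3 / ε ^ 2) * ∫ x in A, Dk k x := by
    intro ε hε j k
    set m : ℝ := (j : ℝ) + 1 with hmdef
    have hm : 0 < m := by positivity
    set K : ℝ := 2 * m * (1 + m) ^ 3 / ε ^ 2 with hKdef
    have step1 : ∫ x in A, max (fW x - fV k x) 0
        ≤ ∫ x in A, (ε + tail j x + K * Dk k x) := by
      refine integral_mono_ae (hmaxint k)
        (((integrable_const ε).add (htailint j)).add ((hDint k).const_mul K)) ?_
      filter_upwards [hDae k] with x hx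
      have hpt := pointwise_meas ε m hε hm (V k x) (W x)
      rw [← hx] at hpt
      simpa [htaildef] using hpt
    have i1 : Integrable (fun x => ε + tail j x) (volume.restrict A) :=
      (integrable_const ε).add (htailint j)
    have i2 : Integrable (fun x => K * Dk k x) (volume.restrict A) :=
      (hDint k).const_mul K
    have step2 : ∫ x in A, (ε + tail j x + K * Dk k x)
        = ε * (volume A).toReal + (∫ x in A, tail j x) + K * ∫ x in A, Dk k x := by
      rw [integral_add i1 i2, integral_add (integrable_const ε) (htailint j),
        integral_const_mul, integral_const]
      simp [Measure.restrict_apply_univ, smul_eq_mul, mul_comm, Measure.real]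
    rw [step2] at step1
    exact step1
  -- master bound
  have hTbound : ∀ (δ : ℝ), 0 < δ → ∀ k,
      ∫ x in A, ‖V k x - W x‖
        ≤ ((∫ x in A, fV k x) - (∫ x in A, fW x))
          + 2 * (∫ x in A, max (fW x - fV k x) 0)
          + δ * (∫ x in A, fW x) + (∫ x in A, Dk k x) / (2 * δ) := by
    intro δ hδ k
    have step1 : ∫ x in A, ‖V k x - W x‖
        ≤ ∫ x in A, ((fV k x - fW x) + 2 * max (fW x - fV k x) 0
            + δ * fW x + Dk k x / (2 * δ)) := by
      refine integral_mono_ae ((hVint k).sub hWint).norm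
        (((((hfVint k).sub hfWint).add ((hmaxint k).const_mul 2)).add
          (hfWint.const_mul δ)).add ((hDint k).div_const (2 * δ))) ?_
      filter_upwards [hDae k] with x hx
      have hpt := pointwise_main δ hδ (V k x) (W x)
      rw [← hx] at hpt
      simpa using hpt
    have step2 : ∫ x in A, ((fV k x - fW x) + 2 * max (fW x - fV k x) 0
            + δ * fW x + Dk k x / (2 * δ))
        = ((∫ x in A, fV k x) - (∫ x in A, fW x))
          + 2 * (∫ x in A, max (fW x - fV k x) 0)
          + δ * (∫ x in A, fW x) + (∫ x in A, Dk k x) / (2 * δ) := by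
      have i1 : Integrable (fun x => fV k x - fW x) (volume.restrict A) :=
        (hfVint k).sub hfWint
      have i2 : Integrable (fun x => 2 * max (fW x - fV k x) 0) (volume.restrict A) :=
        (hmaxint k).const_mul 2
      have i3 : Integrable (fun x => δ * fW x) (volume.restrict A) :=
        hfWint.const_mul δ
      have i4 : Integrable (fun x => Dk k x / (2 * δ)) (volume.restrict A) :=
        (hDint k).div_const (2 * δ)
      have i12 : Integrable (fun x => (fV k x - fW x) + 2 * max (fW x - fV k x) 0)
          (volume.restrict A) := i1.add i2
      have i123 : Integrable (fun x => (fV k x - fW x) + 2 * max (fW x - fV k x) 0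
          + δ * fW x) (volume.restrict A) := i12.add i3
      rw [integral_add i123 i4, integral_add i12 i3,
        integral_add i1 i2, integral_sub (hfVint k) hfWint, integral_const_mul,
        integral_const_mul, integral_div]
    rw [step2] at step1
    exact step1
  -- final argument
  rw [NormedAddCommGroup.tendsto_nhds_zero]
  intro η hη
  set IW : ℝ := ∫ x in A, fW x with hIWdef
  have hIW0 : 0 ≤ IW := integral_nonneg fun x => Real.sqrt_nonneg _
  set μA : ℝ := (volume A).toReal with hμAdef
  have hμA0 : 0 ≤ μA := ENNReal.toReal_nonneg
  obtain ⟨j, hj⟩ : ∃ j : ℕ, ∫ x in A, tail j x < η / 16 :=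
    (htail0.eventually_lt_const (by positivity)).exists
  set ε : ℝ := η / (16 * (μA + 1)) with hεdef
  have hε : 0 < ε := by positivity
  set δ : ℝ := η / (16 * (IW + 1)) with hδdef
  have hδ : 0 < δ := by positivity
  set K : ℝ := 2 * ((j : ℝ) + 1) * (1 + ((j : ℝ) + 1)) ^ 3 / ε ^ 2 with hKdef
  have hK0 : 0 ≤ K := by positivity
  have hE1 : ∀ᶠ k in atTop, (∫ x in A, fV k x) < IW + η / 16 :=
    harea.eventually_lt_const (by linarith)
  have hE2 : ∀ᶠ k in atTop, K * (∫ x in A, Dk k x) < η / 16 := by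
    have ht2 : Tendsto (fun k => K * ∫ x in A, Dk k x) atTop (𝓝 (K * 0)) := hdk.const_mul K
    rw [mul_zero] at ht2
    exact ht2.eventually_lt_const (by positivity)
  have hE3 : ∀ᶠ k in atTop, (∫ x in A, Dk k x) / (2 * δ) < η / 16 := by
    have ht3 : Tendsto (fun k => (∫ x in A, Dk k x) / (2 * δ)) atTop (𝓝 (0 / (2 * δ))) :=
      hdk.div_const (2 * δ)
    rw [zero_div] at ht3
    exact ht3.eventually_lt_const (by positivity)
  filter_upwards [hE1, hE2, hE3] with k h1 h2 h3
  have hTk0 : 0 ≤ ∫ x in A, ‖V k x - W x‖ := integral_nonneg fun x => norm_nonneg _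
  rw [Real.norm_eq_abs, abs_of_nonneg hTk0]
  have hN := hNbound ε hε j k
  have hT := hTbound δ hδ k
  have hεμ : ε * μA ≤ η / 16 := by
    have hstep : ε * μA ≤ ε * (μA + 1) :=
      mul_le_mul_of_nonneg_left (by linarith) hε.le
    have heq : ε * (μA + 1) = η / 16 := by
      rw [hεdef]; field_simp
    linarith
  have hδIW : δ * IW ≤ η / 16 := by
    have hstep : δ * IW ≤ δ * (IW + 1) :=
      mul_le_mul_of_nonneg_left (by linarith) hδ.le
    have heq : δ * (IW + 1) = η / 16 := by
      rw [hδdef]; field_simp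
    linarith
  have hmax0 : 0 ≤ ∫ x in A, max (fW x - fV k x) 0 :=
    integral_nonneg fun x => le_max_right _ _
  calc ∫ x in A, ‖V k x - W x‖
      ≤ ((∫ x in A, fV k x) - IW) + 2 * (∫ x in A, max (fW x - fV k x) 0)
        + δ * IW + (∫ x in A, Dk k x) / (2 * δ) := hT
    _ ≤ (η / 16) + 2 * (ε * μA + (∫ x in A, tail j x) + K * ∫ x in A, Dk k x)
        + (η / 16) + (η / 16) := by
        have h4 : (∫ x in A, fV k x) - IW ≤ η / 16 := by linarith
        nlinarith [hN, h3.le, hδIW]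
    _ < η := by nlinarith [hj, h2, hεμ]
end
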